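/- Let p ≥ 5 be a prime and let k be an integer with 2 ≤ k ≤ p-2. Then v_p(s(p, k)) ≥ 1 + ε_{k-1}, with equality holding if and only if v_p(B_{p-1-2⌊k/2⌋}) = 0, where ε_{k-1} = 0 if k-1 is even and ε_{k-1} = 1 if k-1 is odd. -/

import Mathlib

set_option linter.unusedSectionVars false
open Finset

variable {p : ℕ} [hp : Fact p.Prime]

/-- `a = 0` or `v_p(a) ≥ n`. -/
def VG (p : ℕ) (n : ℤ) (a : ℚ) : Prop := a = 0 ∨ n ≤ padicValRat p a

lemma VG.zero (n : ℤ) : VG p n 0 := Or.inl rfl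

lemma VG.mono {n m : ℤ} {a : ℚ} (h : VG p n a) (hmn : m ≤ n) : VG p m a :=
  h.imp id (le_trans hmn)

lemma VG.add {n : ℤ} {a b : ℚ} (ha : VG p n a) (hb : VG p n b) : VG p n (a + b) := by
  rcases ha with rfl | ha
  · simpa using hb
  rcases hb with rfl | hb
  · rw [add_zero]; exact Or.inr ha
  by_cases h : a + b = 0
  · exact Or.inl h
  · exact Or.inr (le_trans (le_min ha hb) (padicValRat.min_le_padicValRat_add h))

lemma VG.neg {n : ℤ} {a : ℚ} (ha : VG p n a) : VG p n (-a) := by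
  rcases ha with rfl | ha
  · simpa using VG.zero n
  · exact Or.inr (by rwa [padicValRat.neg])

lemma VG.sub {n : ℤ} {a b : ℚ} (ha : VG p n a) (hb : VG p n b) : VG p n (a - b) := by
  rw [sub_eq_add_neg]; exact ha.add hb.neg

lemma VG.mul {n m : ℤ} {a b : ℚ} (ha : VG p n a) (hb : VG p m b) : VG p (n + m) (a * b) := by
  rcases ha with rfl | ha
  · simpa using VG.zero _
  rcases hb with rfl | hb
  · simpa using VG.zero _
  by_cases h0 : a = 0
  · subst h0; simpa using VG.zero _
  by_cases h1 : b = 0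
  · subst h1; simpa using VG.zero _
  exact Or.inr (by rw [padicValRat.mul h0 h1]; exact add_le_add ha hb)

lemma VG.sum {ι : Type*} {n : ℤ} {s : Finset ι} {f : ι → ℚ} (h : ∀ i ∈ s, VG p n (f i)) :
    VG p n (∑ i ∈ s, f i) := by
  classical
  induction s using Finset.induction with
  | empty => simpa using VG.zero n
  | insert _ _ hx ih =>
      rw [Finset.sum_insert hx]
      exact (h _ (Finset.mem_insert_self _ _)).add
        (ih fun i hi => h i (Finset.mem_insert_of_mem hi))

lemma VG_intCast (m : ℤ) : VG p 0 (m : ℚ) := by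
  by_cases h : m = 0
  · subst h; simpa using VG.zero 0
  · exact Or.inr (by rw [padicValRat.of_int]; exact_mod_cast Int.natCast_nonneg _)

lemma VG_natCast (m : ℕ) : VG p 0 (m : ℚ) := by exact_mod_cast VG_intCast (m : ℤ)

lemma VG_self : VG p 1 (p : ℚ) :=
  Or.inr (by rw [padicValRat.self hp.out.one_lt])

lemma VG_pow_self (t : ℕ) : VG p t ((p : ℚ) ^ t) := by
  induction t with
  | zero => simpa using VG_intCast 1
  | succ n ih => rw [pow_succ]; exact_mod_cast ih.mul VG_self

/-- Unit in `ℤ_p`: valuation exactly 0 for a nonzero int not divisible by `p`. -/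
lemma val_eq_zero_of_not_dvd {m : ℤ} (hm : m ≠ 0) (h : ¬ (p : ℤ) ∣ m) :
    padicValRat p (m : ℚ) = 0 := by
  rw [padicValRat.of_int, padicValInt.eq_zero_of_not_dvd h]; rfl

/-- if `a = b + c` with exact valuation `n` for `b` and `VG (n+1)` for `c`,
then `a` has exact valuation `n`. -/
lemma val_eq_of_eq_add {n : ℤ} {a b c : ℚ} (h : a = b + c) (hb0 : b ≠ 0)
    (hb : padicValRat p b = n) (hc : VG p (n + 1) c) : a ≠ 0 ∧ padicValRat p a = n := by
  rcases hc with rfl | hc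
  · rw [add_zero] at h; exact ⟨h ▸ hb0, h ▸ hb⟩
  by_cases hc0 : c = 0
  · rw [hc0, add_zero] at h; exact ⟨h ▸ hb0, h ▸ hb⟩
  have hlt : padicValRat p b < padicValRat p c := by omega
  have hab : a ≠ 0 := by
    rintro rfl
    have : b = -c := by linarith [h]
    rw [this, padicValRat.neg] at hb; omega
  refine ⟨hab, ?_⟩
  rw [h, padicValRat.add_eq_of_lt (h ▸ hab) hb0 hc0 hlt, hb]

/-- The (unsigned) Stirling number of the first kind `s(n,k)`, defined by
`x(x+1)(x+2)⋯(x+n-1) = Σ_{k=0}^{n} s(n,k) x^k`. -/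
noncomputable def stirlingFirst (n k : ℕ) : ℕ := (ascPochhammer ℕ n).coeff k

lemma ascPochhammer_eq_prod_range (R : Type*) [CommSemiring R] (n : ℕ) :
    ascPochhammer R n = ∏ i ∈ range n, (Polynomial.X + Polynomial.C (i : R)) := by
  induction n with
  | zero => simp
  | succ m ih =>
      rw [ascPochhammer_succ_right, prod_range_succ, ih]
      simp [Polynomial.C_eq_natCast]

section Vals
variable (p : ℕ) [hp : Fact p.Prime]

/-- `e j` : elementary symmetric function of `1, …, p-1` in `ℚ`. -/
noncomputable def eE (j : ℕ) : ℚ :=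
  MvPolynomial.aeval (fun i : Fin (p-1) => ((i : ℕ) + 1 : ℚ)) (MvPolynomial.esymm (Fin (p-1)) ℚ j)

/-- power sums of `1, …, p-1`. -/
noncomputable def pS (j : ℕ) : ℚ := ∑ i ∈ range p, (i : ℚ) ^ j

lemma eE_eq_coeff (j : ℕ) (hj : j ≤ p - 1) :
    eE p j = ((∏ i : Fin (p-1), (Polynomial.X + Polynomial.C ((i : ℕ) + 1 : ℚ))).coeff (p - 1 - j)) := by
  rw [Finset.prod_X_add_C_coeff _ _ (by simpa using by omega)]
  rw [eE, MvPolynomial.aeval_esymm_eq_multiset_esymm]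
  rw [show #(Finset.univ : Finset (Fin (p-1))) - (p - 1 - j) = j by simpa using by omega]
  rw [← Finset.esymm_map_val]

lemma stirling_eq_eE (k : ℕ) (hk1 : 1 ≤ k) (hk : k ≤ p) :
    (stirlingFirst p k : ℚ) = eE p (p - k) := by
  have h1 : (stirlingFirst p k : ℚ) = (ascPochhammer ℚ p).coeff k := by
    rw [stirlingFirst]
    rw [show (ascPochhammer ℚ p) = (ascPochhammer ℕ p).map (algebraMap ℕ ℚ) from
      (ascPochhammer_map (algebraMap ℕ ℚ) p).symm]
    rw [Polynomial.coeff_map]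
    simp
  rw [h1, eE_eq_coeff p _ (by omega), ascPochhammer_eq_prod_range]
  have h2 : ∏ i ∈ range p, (Polynomial.X + Polynomial.C (i : ℚ)) =
      Polynomial.X * ∏ i : Fin (p-1), (Polynomial.X + Polynomial.C ((i : ℕ) + 1 : ℚ)) := by
    rw [Fin.prod_univ_eq_prod_range (fun i => (Polynomial.X + Polynomial.C ((i : ℕ) + 1 : ℚ)))]
    rw [← Nat.succ_pred_eq_of_pos (show 0 < p by omega), prod_range_succ']
    push_cast
    rw [Polynomial.C_0, add_zero, mul_comm]
  obtain ⟨k', rfl⟩ : ∃ k', k = k' + 1 := ⟨k - 1, by omega⟩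
  rw [h2, Polynomial.coeff_X_mul]
  congr 1
  omega
end Vals

section Vals2
variable (p : ℕ) [hp : Fact p.Prime]

lemma val_natCast_eq_zero {j : ℕ} (hj0 : j ≠ 0) (hj : ¬ p ∣ j) :
    padicValRat p (j : ℚ) = 0 := by
  have := val_eq_zero_of_not_dvd (p := p) (m := (j : ℤ))
    (by exact_mod_cast hj0) (by exact_mod_cast hj)
  simpa using this

lemma VG.of_mul_unit {n : ℤ} {a c : ℚ} (hc : c ≠ 0) (hcv : padicValRat p c = 0)
    (h : VG p n (a * c)) : VG p n a := by
  by_cases ha : a = 0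
  · exact Or.inl ha
  rcases h with h | h
  · exact absurd (mul_eq_zero.mp h) (by tauto)
  · exact Or.inr (by rwa [padicValRat.mul ha hc, hcv, add_zero] at h)

lemma VG.of_mul_p {n : ℤ} {a : ℚ} (h : VG p (n + 1) (a * p)) : VG p n a := by
  by_cases ha : a = 0
  · exact Or.inl ha
  rcases h with h | h
  · exact absurd (mul_eq_zero.mp h)
      (by simp [ha, Nat.cast_eq_zero, hp.out.ne_zero])
  · refine Or.inr ?_
    rw [padicValRat.mul ha (by exact_mod_cast hp.out.ne_zero),
      padicValRat.self hp.out.one_lt] at h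
    omega

lemma VG_neg_p_pow (t : ℕ) : VG p t ((-(p : ℚ)) ^ t) := by
  rw [neg_pow]
  have h1 : VG p 0 ((-1 : ℚ) ^ t) := by
    rcases neg_one_pow_eq_one_iff_even (R := ℚ) (n := t) (by norm_num) |>.2 with _
    rcases Nat.even_or_odd t with h | h
    · rw [h.neg_one_pow]; exact_mod_cast VG_intCast 1
    · rw [h.neg_one_pow]; exact_mod_cast VG_intCast (-1)
  simpa using h1.mul (VG_pow_self t)

/-- `p ∣ ∑_{i<p} i^m` for `1 ≤ m ≤ p-2`. -/
lemma pS_vg {m : ℕ} (hm1 : 1 ≤ m) (hm : m ≤ p - 2) : VG p 1 (pS p m) := by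
  have hSz : pS p m = ((∑ i ∈ range p, (i : ℤ) ^ m : ℤ) : ℚ) := by
    push_cast; rfl
  set S : ℤ := ∑ i ∈ range p, (i : ℤ) ^ m with hS
  have hdvd : (p : ℤ) ∣ S := by
    have hcast : ((S : ℤ) : ZMod p) = ∑ x : ZMod p, x ^ m := by
      have himg : (Finset.univ : Finset (ZMod p)) =
          Finset.image (fun i : ℕ => (i : ZMod p)) (range p) := by
        apply Finset.eq_of_subset_of_card_le
        · intro x _
          exact Finset.mem_image.mpr ⟨x.val, Finset.mem_range.mpr (ZMod.val_lt x), by simp⟩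
        · refine le_trans (Finset.card_image_le) ?_
          simp [ZMod.card]
      rw [hS]
      push_cast
      rw [himg, Finset.sum_image ?inj]
      case inj =>
        intro x hx y hy hxy
        rw [← ZMod.val_cast_of_lt (Finset.mem_range.mp hx),
          ← ZMod.val_cast_of_lt (Finset.mem_range.mp hy), show (x : ZMod p) = y from hxy]
    have hzero : (∑ x : ZMod p, x ^ m) = 0 := by
      apply FiniteField.sum_pow_lt_card_sub_one
      rw [ZMod.card]; omega
    rw [hzero] at hcast
    exact_mod_cast (ZMod.intCast_zmod_eq_zero_iff_dvd S p).mp hcast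
  obtain ⟨t, ht⟩ := hdvd
  rw [hSz, ht]
  push_cast
  simpa using VG_self.mul (VG_intCast t)

end Vals2

section Newton
open MvPolynomial
variable (p : ℕ) [hp : Fact p.Prime]

lemma eE_zero : eE p 0 = 1 := by simp [eE, MvPolynomial.esymm_zero]

lemma aeval_psum_eq_pS {m : ℕ} (hm : 1 ≤ m) :
    MvPolynomial.aeval (fun i : Fin (p-1) => ((i : ℕ) + 1 : ℚ))
      (MvPolynomial.psum (Fin (p-1)) ℚ m) = pS p m := by
  have hp1 : 1 ≤ p := hp.out.one_lt.le
  rw [MvPolynomial.psum, map_sum]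
  simp only [map_pow, MvPolynomial.aeval_X]
  rw [Fin.sum_univ_eq_sum_range (fun i => ((i : ℚ) + 1) ^ m)]
  rw [pS, ← Nat.succ_pred_eq_of_pos (show 0 < p by omega), Finset.sum_range_succ']
  rw [Nat.cast_zero, zero_pow (by omega : m ≠ 0), add_zero]
  apply Finset.sum_congr rfl
  intro i _
  push_cast
  ring

lemma newton (j : ℕ) :
    (j : ℚ) * eE p j = (-1) ^ (j + 1) *
      ∑ a ∈ Finset.HasAntidiagonal.antidiagonal j with a.1 < j, (-1) ^ a.1 * eE p a.1 * pS p a.2 := by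
  have h := congrArg (MvPolynomial.aeval (fun i : Fin (p-1) => ((i : ℕ) + 1 : ℚ)))
    (MvPolynomial.mul_esymm_eq_sum (Fin (p-1)) ℚ j)
  simp only [map_mul, map_sum, map_pow, map_neg, map_one, map_natCast] at h
  rw [eE, h]
  congr 1
  apply Finset.sum_congr rfl
  intro a ha
  simp only [Finset.mem_filter, Finset.HasAntidiagonal.mem_antidiagonal] at ha
  rw [eE]
  congr 1
  exact aeval_psum_eq_pS p (by omega)

lemma eE_vg : ∀ j, 1 ≤ j → j ≤ p - 2 → VG p 1 (eE p j) := by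
  intro j
  induction j using Nat.strong_induction_on with
  | _ j ih =>
    intro hj1 hj2
    have hnz : (j : ℚ) ≠ 0 := by positivity
    have h : VG p 1 ((j : ℚ) * eE p j) := by
      rw [newton]
      have : VG p 1 (∑ a ∈ Finset.HasAntidiagonal.antidiagonal j with a.1 < j,
          (-1) ^ a.1 * eE p a.1 * pS p a.2) := by
        apply VG.sum
        · intro a ha
          simp only [Finset.mem_filter, Finset.HasAntidiagonal.mem_antidiagonal] at ha
          by_cases h1 : a.1 = 0
          · have : a.2 = j := by omega
            rw [h1, this, eE_zero]
            simpa using pS_vg p (by omega) (by omega)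
          · have hterm : VG p 1 (eE p a.1 * pS p a.2) := by
              have h2 : VG p 0 (pS p a.2) := by
                rw [pS]
                exact VG.sum fun i _ => by
                  simpa using (VG_natCast (p := p) (i ^ a.2))
              simpa using (ih a.1 (by omega) (by omega) (by omega)).mul h2
            have := (VG_intCast (p := p) ((-1)^a.1 : ℤ)).mul hterm
            push_cast at this
            simpa [mul_assoc] using this
      have h2 := (VG_intCast (p := p) ((-1)^(j+1) : ℤ)).mul this
      push_cast at h2
      simpa using h2
    exact VG.of_mul_unit p hnz
      (val_natCast_eq_zero p (by omega) (fun hd => by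
        have := Nat.le_of_dvd (by omega) hd; omega)) (by rwa [mul_comm] at h)

end Newton

section Faulhaber
variable (p : ℕ) [hp : Fact p.Prime] (hp5 : 5 ≤ p)

lemma VG_inv_nat {j : ℕ} (hj0 : j ≠ 0) (hj : ¬ p ∣ j) : VG p 0 ((j : ℚ)⁻¹) :=
  Or.inr (by rw [padicValRat.inv, val_natCast_eq_zero p hj0 hj]; simp)

lemma not_dvd_of_lt {j : ℕ} (hj0 : j ≠ 0) (hjp : j < p) : ¬ p ∣ j := fun hd =>
  by have := Nat.le_of_dvd (by omega) hd; omega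

lemma main_cong {j : ℕ} (hj2 : 2 ≤ j) (hj : j ≤ p - 2) :
    VG p 2 ((j : ℚ) * eE p j - (-1) ^ (j + 1) * pS p j) := by
  rw [newton]
  have hmem : ((0, j) : ℕ × ℕ) ∈ (Finset.HasAntidiagonal.antidiagonal j).filter (fun a => a.1 < j) := by
    simp only [Finset.mem_filter, Finset.HasAntidiagonal.mem_antidiagonal]
    omega
  rw [← Finset.add_sum_erase _ _ hmem]
  have h0 : ((-1:ℚ)) ^ ((0,j) : ℕ × ℕ).1 * eE p ((0,j) : ℕ × ℕ).1 * pS p ((0,j) : ℕ × ℕ).2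
      = pS p j := by
    rw [eE_zero]; norm_num
  rw [h0, mul_add, add_sub_cancel_left]
  have : VG p 2 (∑ a ∈ ((Finset.HasAntidiagonal.antidiagonal j).filter (fun a => a.1 < j)).erase (0, j),
      (-1) ^ a.1 * eE p a.1 * pS p a.2) := by
    apply VG.sum
    intro a ha
    have hmem2 := Finset.mem_of_mem_erase ha
    have hne := Finset.ne_of_mem_erase ha
    simp only [Finset.mem_filter, Finset.HasAntidiagonal.mem_antidiagonal] at hmem2
    have ha1 : 1 ≤ a.1 := by
      rcases Nat.eq_zero_or_pos a.1 with h | h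
      · exfalso; apply hne
        have h2 : a = (a.1, a.2) := rfl
        rw [h2, h]
        simp only [Prod.mk.injEq, true_and]
        omega
      · omega
    have h1 : VG p 1 (eE p a.1) := eE_vg p a.1 ha1 (by omega)
    have h2 : VG p 1 (pS p a.2) := pS_vg p (by omega) (by omega)
    have h3 := ((VG_intCast (p := p) ((-1)^a.1 : ℤ)).mul h1).mul h2
    push_cast at h3
    simpa using h3
  have h4 := (VG_intCast (p := p) ((-1)^(j+1) : ℤ)).mul this
  push_cast at h4
  simpa using h4

lemma faulhaber_split {m : ℕ} (hm : 1 ≤ m) :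
    pS p m - bernoulli m * p =
      ∑ i ∈ Finset.range m, bernoulli i * ((m+1).choose i) * (p:ℚ) ^ (m+1-i) / (m+1) := by
  have h := sum_range_pow p m
  rw [pS, h, Finset.sum_range_succ]
  have hm1 : ((m:ℚ) + 1) ≠ 0 := by positivity
  have htop : bernoulli m * ((m + 1).choose m : ℚ) * (p:ℚ) ^ (m + 1 - m) / (m + 1)
      = bernoulli m * p := by
    rw [Nat.choose_succ_self_right, show m + 1 - m = 1 by omega]
    push_cast
    field_simp
  rw [htop]
  push_cast
  ring

include hp5 in
lemma term_vg {m i : ℕ} (hB : VG p 0 (bernoulli i)) (him : i < m) (hm : m + 1 < p) :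
    VG p (((m + 1 - i : ℕ) : ℤ)) (bernoulli i * ((m+1).choose i) * (p:ℚ) ^ (m+1-i) / (m+1)) := by
  have h2 : VG p 0 (((m+1).choose i : ℕ) : ℚ) := VG_natCast _
  have h3 : VG p ((m+1-i : ℕ) : ℤ) ((p:ℚ) ^ (m+1-i)) := VG_pow_self _
  have h4 : VG p 0 ((((m+1 : ℕ)) : ℚ)⁻¹) :=
    VG_inv_nat p (by omega) (not_dvd_of_lt p (by omega) (by omega))
  have hall := ((hB.mul h2).mul h3).mul h4
  have heq : bernoulli i * ((m+1).choose i) * (p:ℚ) ^ (m+1-i) / (m+1)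
      = bernoulli i * (((m+1).choose i : ℕ) : ℚ) * (p:ℚ) ^ (m+1-i) * (((m+1 : ℕ) : ℚ))⁻¹ := by
    push_cast
    ring
  rw [heq]
  exact hall.mono (by omega)

include hp5 in
lemma bernoulli_vg : ∀ m, m ≤ p - 2 → VG p 0 (bernoulli m) := by
  intro m
  induction m using Nat.strong_induction_on with
  | _ m ih =>
    intro hm
    match m, ih with
    | 0, _ => rw [bernoulli_zero]; exact_mod_cast VG_intCast 1
    | 1, _ =>
        rw [bernoulli_one, show ((-1:ℚ)/2) = (-1 : ℤ) * (((2:ℕ)):ℚ)⁻¹ by norm_num]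
        exact (VG_intCast (p := p) (-1)).mul
          (VG_inv_nat p (by norm_num) (not_dvd_of_lt p (by norm_num) (by omega)))
    | (m+2), ih =>
      have hsum : VG p 1 (pS p (m+2) - bernoulli (m+2) * p) := by
        rw [faulhaber_split p (by omega)]
        apply VG.sum
        intro i hi
        have hi' := Finset.mem_range.mp hi
        refine (term_vg p hp5 (ih i (by omega) (by omega)) hi' (by omega)).mono ?_
        omega
      have hfin : VG p 1 (bernoulli (m+2) * p) := by
        have := (pS_vg p (show 1 ≤ m+2 by omega) (by omega)).sub hsum
        rwa [sub_sub_cancel] at this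
      exact VG.of_mul_p p (by exact_mod_cast hfin)

include hp5 in
lemma faulhaber_cong {m : ℕ} (hm2 : 2 ≤ m) (hm : m ≤ p - 2) :
    VG p 2 (pS p m - bernoulli m * p) := by
  rw [faulhaber_split p (by omega)]
  apply VG.sum
  intro i hi
  have hi' := Finset.mem_range.mp hi
  refine (term_vg p hp5 (bernoulli_vg p hp5 i (by omega)) hi' (by omega)).mono ?_
  by_cases h0 : i = 0
  · subst h0; omega
  · omega

include hp5 in
lemma star {j : ℕ} (hj2 : 2 ≤ j) (hj : j ≤ p - 2) :
    VG p 2 ((j : ℚ) * eE p j - (-1) ^ (j + 1) * (bernoulli j * p)) := by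
  have h1 := main_cong p hj2 hj
  have h2 := faulhaber_cong p hp5 hj2 hj
  have h3 := (VG_intCast (p := p) ((-1)^(j+1) : ℤ)).mul h2
  push_cast at h3
  have h4 := h1.add (h3.mono (by omega))
  have heq : (j : ℚ) * eE p j - (-1) ^ (j + 1) * (bernoulli j * p) =
      ((j : ℚ) * eE p j - (-1) ^ (j + 1) * pS p j) +
        (-1) ^ (j+1) * (pS p j - bernoulli j * p) := by ring
  rw [heq]
  exact h4

end Faulhaber

section Reflect
open Polynomial
variable (p : ℕ) [hp : Fact p.Prime] (hp5 : 5 ≤ p)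

lemma comp_X_add_C_coeff (Q : Polynomial ℚ) (r : ℚ) (N j : ℕ) (hdeg : Q.natDegree < N) :
    (Q.comp (X + C r)).coeff j = ∑ m ∈ Finset.range N, Q.coeff m * (r ^ (m - j) * (m.choose j)) := by
  conv_lhs => rw [Q.as_sum_range' N hdeg]
  have hcomp : ((∑ i ∈ Finset.range N, monomial i (Q.coeff i)).comp (X + C r)) =
      ∑ i ∈ Finset.range N, C (Q.coeff i) * (X + C r) ^ i := by
    rw [comp_eq_aeval, map_sum]
    apply Finset.sum_congr rfl
    intro i _
    rw [← C_mul_X_pow_eq_monomial, map_mul, map_pow]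
    simp [comp_eq_aeval]
  rw [hcomp, finset_sum_coeff]
  apply Finset.sum_congr rfl
  intro m _
  rw [coeff_C_mul, coeff_X_add_C_pow]

lemma comp_neg_X_coeff (Q : Polynomial ℚ) (j : ℕ) :
    (Q.comp (-X)).coeff j = (-1) ^ j * Q.coeff j := by
  conv_lhs => rw [Q.as_sum_range' (Q.natDegree + 1) (by omega)]
  have hcomp : ((∑ i ∈ Finset.range (Q.natDegree + 1), monomial i (Q.coeff i)).comp (-X)) =
      ∑ i ∈ Finset.range (Q.natDegree + 1), C ((-1) ^ i * Q.coeff i) * X ^ i := by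
    rw [comp_eq_aeval, map_sum]
    apply Finset.sum_congr rfl
    intro i _
    rw [← C_mul_X_pow_eq_monomial, ← comp_eq_aeval, mul_comp, pow_comp, X_comp, C_comp,
      neg_pow, ← C_1, ← C_neg, ← C_pow, ← mul_assoc, ← C_mul, mul_comm (Q.coeff i)]
  rw [hcomp, finset_sum_coeff]
  by_cases hj : j ≤ Q.natDegree
  · rw [Finset.sum_eq_single j]
    · rw [coeff_C_mul, coeff_X_pow, if_pos rfl]
      ring
    · intro m _ hm
      rw [coeff_C_mul, coeff_X_pow, if_neg (fun h => hm h.symm)]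
      ring
    · intro h
      exact absurd (Finset.mem_range.mpr (by omega)) h
  · rw [Finset.sum_eq_zero, Q.coeff_eq_zero_of_natDegree_lt (by omega), mul_zero]
    intro m hm
    have : m ≠ j := by have := Finset.mem_range.mp hm; omega
    rw [coeff_C_mul, coeff_X_pow, if_neg (fun h => this h.symm)]
    ring

noncomputable def Qpoly : Polynomial ℚ :=
  ∏ i ∈ Finset.range (p-1), (X + C ((i:ℚ) + 1))

lemma Qpoly_natDegree : (Qpoly p).natDegree = p - 1 := by
  rw [Qpoly, natDegree_prod_of_monic _ _ (fun i _ => monic_X_add_C _)]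
  simp only [natDegree_X_add_C]
  rw [Finset.sum_const, Finset.card_range, smul_eq_mul, mul_one]

include hp5 in
lemma Qpoly_reflect : (Qpoly p).comp (X - C (p:ℚ)) = (Qpoly p).comp (-X) := by
  rw [Qpoly, Polynomial.prod_comp, Polynomial.prod_comp]
  have hrefl : ∏ i ∈ Finset.range (p-1), ((X + C (((p - 1 - 1 - i : ℕ):ℚ)+1)).comp (X - C (p:ℚ)))
      = ∏ i ∈ Finset.range (p-1), ((X + C ((i:ℚ)+1)).comp (X - C (p:ℚ))) :=
    Finset.prod_range_reflect (fun j => (X + C ((j:ℚ) + 1)).comp (X - C (p:ℚ))) (p - 1)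
  rw [← hrefl]
  have hodd : Odd p := hp.out.odd_of_ne_two (by omega)
  have heven : Even (p - 1) := by
    rcases hodd with ⟨t, ht⟩
    exact ⟨t, by omega⟩
  calc (∏ i ∈ Finset.range (p-1), (X + C (((p - 1 - 1 - i : ℕ):ℚ)+1)).comp (X - C (p:ℚ)))
      = ∏ i ∈ Finset.range (p-1), (-((X + C ((i:ℚ)+1)).comp (-X))) := by
        apply Finset.prod_congr rfl
        intro i hi
        have hi' := Finset.mem_range.mp hi
        have hcast : ((p - 1 - 1 - i : ℕ) : ℚ) = (p : ℚ) - 2 - i := by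
          have : (p - 1 - 1 - i : ℕ) = p - (2 + i) := by omega
          rw [this, Nat.cast_sub (by omega)]
          push_cast
          ring
        rw [add_comp, X_comp, C_comp, add_comp, X_comp, C_comp, hcast]
        simp only [C_add, C_sub, C_neg, C_1, map_ofNat]
        ring
    _ = ((-1 : Polynomial ℚ))^(p-1) * ∏ i ∈ Finset.range (p-1), ((X + C ((i:ℚ)+1)).comp (-X)) := by
        rw [Finset.prod_congr rfl (fun i (_ : i ∈ Finset.range (p-1)) =>
          (neg_one_mul ((X + C ((i:ℚ)+1)).comp (-X))).symm)]
        rw [Finset.prod_mul_distrib, Finset.prod_const, Finset.card_range]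
    _ = ∏ i ∈ Finset.range (p-1), ((X + C ((i:ℚ)+1)).comp (-X)) := by
        rw [heven.neg_one_pow, one_mul]

end Reflect

section KeyLemmas
open Polynomial
variable (p : ℕ) [hp : Fact p.Prime] (hp5 : 5 ≤ p)

lemma Qpoly_coeff {m : ℕ} (hm : m ≤ p - 1) : (Qpoly p).coeff m = eE p (p-1-m) := by
  rw [Qpoly, ← Fin.prod_univ_eq_prod_range (fun i => X + C ((i:ℚ)+1)) (p-1)]
  rw [eE_eq_coeff p _ (by omega)]
  have h2 : p - 1 - (p - 1 - m) = m := by omega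
  rw [h2]

lemma eE_pos {j : ℕ} (hj : j ≤ p - 1) : 0 < eE p j := by
  rw [eE_eq_coeff p j hj,
    Finset.prod_X_add_C_coeff (Finset.univ : Finset (Fin (p-1)))
      (fun i => ((i : ℕ) + 1 : ℚ)) (by simpa using by omega)]
  apply Finset.sum_pos
  · intro t _
    exact Finset.prod_pos fun i _ => by positivity
  · apply Finset.powersetCard_nonempty_of_le
    simpa using by omega

lemma bernoulli_odd_zero {n : ℕ} (h : Odd n) (h1 : n ≠ 1) : _root_.bernoulli n = 0 := by
  rcases Nat.eq_zero_or_pos n with h0 | h0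
  · exact absurd h (by simp [h0])
  rw [_root_.bernoulli_eq_bernoulli'_of_ne_one h1]
  exact bernoulli'_eq_zero_of_odd h (by rcases h with ⟨t, rfl⟩; omega)

lemma bernoulli_even_ne_zero {n : ℕ} (hn : Even n) (h2 : 2 ≤ n) : _root_.bernoulli n ≠ 0 := by
  obtain ⟨t, rfl⟩ := hn
  have ht : t ≠ 0 := by omega
  intro h0
  have hz := riemannZeta_two_mul_nat ht
  rw [show t + t = 2 * t by ring] at h0
  rw [h0] at hz
  have hne : riemannZeta (2 * t) ≠ 0 := by
    apply riemannZeta_ne_zero_of_one_lt_re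
    have h2 : (2 * (t:ℂ)) = ((2*t : ℕ) : ℂ) := by push_cast; ring
    rw [h2, Complex.natCast_re]
    exact_mod_cast (by omega : 1 < 2*t)
  exact hne (by rw [hz]; norm_num)

lemma VG_ge_of_ne {n : ℤ} {a : ℚ} (h : VG p n a) (ha : a ≠ 0) : n ≤ padicValRat p a := by
  rcases h with h | h
  · exact absurd h ha
  · exact h

include hp5 in
lemma eE_exact {j : ℕ} (hj2 : 2 ≤ j) (hj : j ≤ p - 2) (hje : Even j) :
    (1 ≤ padicValRat p (eE p j)) ∧
    (padicValRat p (eE p j) = 1 ↔ padicValRat p (_root_.bernoulli j) = 0) ∧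
    (padicValRat p (_root_.bernoulli j) ≠ 0 → 2 ≤ padicValRat p (eE p j)) := by
  have hE0 : eE p j ≠ 0 := ne_of_gt (eE_pos p (by omega))
  have hj0 : (j : ℚ) ≠ 0 := by positivity
  have hjv : padicValRat p ((j:ℚ)) = 0 :=
    val_natCast_eq_zero p (by omega) (not_dvd_of_lt p (by omega) (by omega))
  have hmulv : padicValRat p ((j:ℚ) * eE p j) = padicValRat p (eE p j) := by
    rw [padicValRat.mul hj0 hE0, hjv, zero_add]
  have hB0 : _root_.bernoulli j ≠ 0 := bernoulli_even_ne_zero hje hj2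
  have hBv : 0 ≤ padicValRat p (_root_.bernoulli j) :=
    VG_ge_of_ne p (bernoulli_vg p hp5 j hj) hB0
  have hstar := star p hp5 hj2 hj
  set c : ℚ := (-1) ^ (j + 1) * (_root_.bernoulli j * p) with hc
  have hcne : c ≠ 0 := by
    apply mul_ne_zero (by positivity)
    exact mul_ne_zero hB0 (by exact_mod_cast hp.out.ne_zero)
  have hcv : padicValRat p c = padicValRat p (_root_.bernoulli j) + 1 := by
    have hjodd : Odd (j + 1) := hje.add_one
    rw [hc, hjodd.neg_one_pow, neg_one_mul, padicValRat.neg,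
      padicValRat.mul hB0 (by exact_mod_cast hp.out.ne_zero),
      padicValRat.self hp.out.one_lt]
  by_cases hcase : padicValRat p (_root_.bernoulli j) = 0
  · have hcv1 : padicValRat p c = 1 := by rw [hcv, hcase]; ring
    have := val_eq_of_eq_add (p := p) (n := 1)
      (show (j:ℚ) * eE p j = c + ((j:ℚ) * eE p j - c) by ring) hcne hcv1
      (hstar.mono (by omega))
    have hv1 : padicValRat p (eE p j) = 1 := by rw [← hmulv]; exact this.2
    exact ⟨by omega, by rw [hv1]; simp [hcase], fun h => absurd hcase h⟩
  · have hB1 : 1 ≤ padicValRat p (_root_.bernoulli j) := by omega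
    have hcvg : VG p 2 c := Or.inr (by omega)
    have h2 : VG p 2 ((j:ℚ) * eE p j) := by
      have := hstar.add hcvg
      simpa using this
    have hge2 : 2 ≤ padicValRat p (eE p j) := by
      rw [← hmulv]
      exact VG_ge_of_ne p h2 (mul_ne_zero hj0 hE0)
    exact ⟨by omega, by constructor <;> intro h <;> omega, fun _ => hge2⟩

include hp5 in
lemma refl_cong {j : ℕ} (hj1 : 1 ≤ j) (hjo : Odd j) (hj : j ≤ p - 4) :
    VG p 3 (2 * (Qpoly p).coeff j - ((j:ℚ)+1) * p * (Qpoly p).coeff (j+1)) := by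
  have hdeg : (Qpoly p).natDegree < p := by rw [Qpoly_natDegree]; omega
  have hid := congrArg (fun Q => Polynomial.coeff Q j) (Qpoly_reflect p hp5)
  rw [show X - C ((p:ℚ)) = X + C (-(p:ℚ)) by rw [map_neg]; ring] at hid
  rw [comp_X_add_C_coeff (Qpoly p) (-(p:ℚ)) p j hdeg, comp_neg_X_coeff] at hid
  rw [hjo.neg_one_pow, neg_one_mul] at hid
  -- split off the m = j and m = j+1 terms
  set f : ℕ → ℚ := fun m => (Qpoly p).coeff m * ((-(p:ℚ)) ^ (m - j) * (m.choose j)) with hf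
  have hmemj : j ∈ Finset.range p := Finset.mem_range.mpr (by omega)
  have hmemj1 : j + 1 ∈ (Finset.range p).erase j := by
    rw [Finset.mem_erase]
    exact ⟨by omega, Finset.mem_range.mpr (by omega)⟩
  rw [← Finset.add_sum_erase _ f hmemj, ← Finset.add_sum_erase _ f hmemj1] at hid
  have hfj : f j = (Qpoly p).coeff j := by
    rw [hf]; simp
  have hfj1 : f (j+1) = -((j:ℚ)+1) * p * (Qpoly p).coeff (j+1) := by
    rw [hf]
    simp only [Nat.add_sub_cancel_left, pow_one, Nat.choose_succ_self_right]
    push_cast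
    ring
  rw [hfj, hfj1] at hid
  have hkey : 2 * (Qpoly p).coeff j - ((j:ℚ)+1) * p * (Qpoly p).coeff (j+1) =
      -∑ m ∈ ((Finset.range p).erase j).erase (j+1), f m := by linarith [hid]
  rw [hkey]
  apply VG.neg
  apply VG.sum
  intro m hm
  have hm1 : m ≠ j + 1 := (Finset.mem_erase.mp hm).1
  have hm2 : m ≠ j := (Finset.mem_erase.mp (Finset.mem_erase.mp hm).2).1
  have hm3 : m < p := Finset.mem_range.mp (Finset.mem_erase.mp (Finset.mem_erase.mp hm).2).2
  rcases lt_or_ge m j with hlt | hge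
  · left
    rw [hf]
    simp [Nat.choose_eq_zero_of_lt hlt]
  · have hge2 : j + 2 ≤ m := by omega
    have hchoose : VG p 0 ((m.choose j : ℕ) : ℚ) := VG_natCast _
    have hpow : VG p ((m - j : ℕ) : ℤ) ((-(p:ℚ)) ^ (m - j)) := VG_neg_p_pow p _
    rcases Nat.lt_or_ge m (p-1) with hmlt | hmge
    · have hcoeff : VG p 1 ((Qpoly p).coeff m) := by
        rw [Qpoly_coeff p (by omega)]
        exact eE_vg p _ (by omega) (by omega)
      have := hcoeff.mul (hpow.mul hchoose)
      exact this.mono (by omega)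
    · have hmeq : m = p - 1 := by omega
      have hcoeff : VG p 0 ((Qpoly p).coeff m) := by
        rw [Qpoly_coeff p (by omega), hmeq]
        rw [show p - 1 - (p-1) = 0 by omega, eE_zero]
        exact_mod_cast VG_intCast 1
      have := hcoeff.mul (hpow.mul hchoose)
      refine this.mono ?_
      have : p - 1 - j ≥ 3 := by omega
      omega
  end KeyLemmas

section Assemble
variable (p : ℕ) [hp : Fact p.Prime] (hp5 : 5 ≤ p)

include hp5 in
lemma even_exact {k : ℕ} (hk2 : 2 ≤ k) (hke : Even k) (hk : k ≤ p - 2) :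
    (2 ≤ padicValRat p (eE p (p-k))) ∧
    (padicValRat p (eE p (p-k)) = 2 ↔ padicValRat p (bernoulli (p-1-k)) = 0) := by
  have hodd : Odd p := hp.out.odd_of_ne_two (by omega)
  obtain ⟨u, hu⟩ := hke
  obtain ⟨t, ht⟩ := hodd
  have hk3 : k ≤ p - 3 := by omega
  set j := k - 1 with hj
  have hjo : Odd j := by rw [Nat.odd_iff]; omega
  have hrc := refl_cong p hp5 (j := j) (by omega) hjo (by omega)
  have hQj : (Qpoly p).coeff j = eE p (p - k) := by
    rw [Qpoly_coeff p (by omega)]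
    congr 1
    omega
  have hQj1 : (Qpoly p).coeff (j+1) = eE p (p - 1 - k) := by
    rw [Qpoly_coeff p (by omega)]
    congr 1
    omega
  have hcast : ((j:ℚ) + 1) = (k : ℚ) := by
    have : j + 1 = k := by omega
    exact_mod_cast congrArg (Nat.cast : ℕ → ℚ) this
  rw [hQj, hQj1, hcast] at hrc
  -- facts about B := eE p (p-1-k)
  have hBfacts := eE_exact p hp5 (j := p - 1 - k) (by omega) (by omega)
    (by rw [Nat.even_iff]; omega)
  obtain ⟨h1B, h2B, h3B⟩ := hBfacts
  have hA0 : eE p (p - k) ≠ 0 := ne_of_gt (eE_pos p (by omega))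
  have hB0 : eE p (p - 1 - k) ≠ 0 := ne_of_gt (eE_pos p (by omega))
  have hp0 : ((p:ℚ)) ≠ 0 := by exact_mod_cast hp.out.ne_zero
  have hk0 : ((k:ℚ)) ≠ 0 := by positivity
  have h2v : padicValRat p (2 * eE p (p - k)) = padicValRat p (eE p (p - k)) := by
    rw [show ((2:ℚ)) = ((2:ℕ):ℚ) by norm_num, padicValRat.mul (by norm_num) hA0,
      val_natCast_eq_zero p (by norm_num) (not_dvd_of_lt p (by norm_num) (by omega)), zero_add]
  have hkv : padicValRat p ((k:ℚ)) = 0 :=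
    val_natCast_eq_zero p (by omega) (not_dvd_of_lt p (by omega) (by omega))
  have hprodv : padicValRat p ((k:ℚ) * p * eE p (p - 1 - k)) =
      1 + padicValRat p (eE p (p - 1 - k)) := by
    rw [padicValRat.mul (mul_ne_zero hk0 hp0) hB0, padicValRat.mul hk0 hp0, hkv,
      padicValRat.self hp.out.one_lt]
    ring
  by_cases hcase : padicValRat p (bernoulli (p-1-k)) = 0
  · have hvB1 : padicValRat p (eE p (p - 1 - k)) = 1 := h2B.mpr hcase
    have hprod1 : padicValRat p ((k:ℚ) * p * eE p (p - 1 - k)) = 2 := by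
      rw [hprodv, hvB1]; norm_num
    have := val_eq_of_eq_add (p := p) (n := 2)
      (show 2 * eE p (p - k) = (k:ℚ) * p * eE p (p - 1 - k) +
        (2 * eE p (p - k) - (k:ℚ) * p * eE p (p - 1 - k)) by ring)
      (mul_ne_zero (mul_ne_zero hk0 hp0) hB0) hprod1 (hrc.mono (by omega))
    have hv2 : padicValRat p (eE p (p - k)) = 2 := by rw [← h2v]; exact this.2
    exact ⟨by omega, by rw [hv2]; simp [hcase]⟩
  · have hvB2 : 2 ≤ padicValRat p (eE p (p - 1 - k)) := h3B hcase
    have hprodvg : VG p 3 ((k:ℚ) * p * eE p (p - 1 - k)) := Or.inr (by omega)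
    have h3 : VG p 3 (2 * eE p (p - k)) := by
      have := hrc.add hprodvg
      simpa using this
    have hge : 3 ≤ padicValRat p (2 * eE p (p - k)) :=
      VG_ge_of_ne p h3 (by positivity)
    rw [h2v] at hge
    exact ⟨by omega, by constructor <;> intro h <;> omega⟩

include hp5 in
theorem stmt15' (k : ℕ) (hk2 : 2 ≤ k) (hk : k ≤ p - 2) :
    padicValNat p (stirlingFirst p k) ≥ 1 + (if Even (k - 1) then 0 else 1) ∧
    (padicValNat p (stirlingFirst p k) = 1 + (if Even (k - 1) then 0 else 1) ↔
      padicValRat p (bernoulli (p - 1 - 2 * (k / 2))) = 0) := by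
  have hp5' := hp5
  have hodd : Odd p := hp.out.odd_of_ne_two (by omega)
  obtain ⟨t, ht⟩ := hodd
  have hcast : ((stirlingFirst p k : ℕ) : ℚ) = eE p (p - k) :=
    stirling_eq_eE p k (by omega) (by omega)
  have hvnat : padicValRat p ((stirlingFirst p k : ℕ) : ℚ) =
      (padicValNat p (stirlingFirst p k) : ℤ) := by simp
  have hveq : (padicValNat p (stirlingFirst p k) : ℤ) = padicValRat p (eE p (p - k)) := by
    rw [← hvnat, hcast]
  rcases Nat.even_or_odd k with hke | hko
  · -- k even
    have hif : (if Even (k - 1) then (0:ℕ) else 1) = 1 := by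
      rw [if_neg]
      rw [Nat.even_iff]
      obtain ⟨u, hu⟩ := hke
      omega
    have hidx : p - 1 - 2 * (k / 2) = p - 1 - k := by
      obtain ⟨u, hu⟩ := hke
      omega
    rw [hif, hidx]
    obtain ⟨h1, h2⟩ := even_exact p hp5 hk2 hke hk
    constructor
    · exact_mod_cast hveq ▸ h1
    · rw [← h2, ← hveq]
      constructor <;> intro h <;> omega
  · -- k odd
    have hif : (if Even (k - 1) then (0:ℕ) else 1) = 0 := by
      rw [if_pos]
      rw [Nat.even_iff]
      obtain ⟨u, hu⟩ := hko
      omega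
    have hidx : p - 1 - 2 * (k / 2) = p - k := by
      obtain ⟨u, hu⟩ := hko
      omega
    rw [hif, hidx]
    obtain ⟨u, hu⟩ := hko
    obtain ⟨h1, h2, _⟩ := eE_exact p hp5 (j := p - k) (by omega) (by omega)
      (by rw [Nat.even_iff]; omega)
    constructor
    · exact_mod_cast hveq ▸ h1
    · rw [← h2, ← hveq]
      constructor <;> intro h <;> omega

end Assemble

theorem stmt15 (p k : ℕ) (hp : p.Prime) (hp5 : 5 ≤ p)
    (hk2 : 2 ≤ k) (hk : k ≤ p - 2) :
    padicValNat p (stirlingFirst p k) ≥ 1 + (if Even (k - 1) then 0 else 1) ∧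
    (padicValNat p (stirlingFirst p k) = 1 + (if Even (k - 1) then 0 else 1) ↔
      padicValRat p (bernoulli (p - 1 - 2 * (k / 2))) = 0) := by
  haveI : Fact p.Prime := ⟨hp⟩
  exact stmt15' p hp5 k hk2 hk
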